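/- In the setting of the previous statement (finite Ω, A, receiver utility u, best-reply regions B(a) ⊂ Δ(Ω)): if B(a) is nonempty and dim(B(a)) < N − 1, then there exists an action b ≠ a with B(a) ⊆ B(b) and dim(B(b)) = N − 1. -/

import Mathlib

open Module Metric Set Finset
namespace Stmt10Aux

noncomputable def sumL (N : ℕ) : EuclideanSpace ℝ (Fin N) →ₗ[ℝ] ℝ :=
  ∑ j, EuclideanSpace.projₗ j

lemma sumL_apply {N : ℕ} (x : EuclideanSpace ℝ (Fin N)) : sumL N x = ∑ j, x j := by
  simp [sumL, LinearMap.sum_apply, EuclideanSpace.projₗ, PiLp.projₗ]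

lemma finrank_ker_sumL {N : ℕ} (hN : 1 ≤ N) :
    finrank ℝ (LinearMap.ker (sumL N)) = N - 1 := by
  have hsurj : LinearMap.range (sumL N) = ⊤ := by
    rw [LinearMap.range_eq_top]
    intro r
    refine ⟨EuclideanSpace.single (⟨0, hN⟩ : Fin N) r, ?_⟩
    rw [sumL_apply]
    simp [EuclideanSpace.single_apply]
  have h1 := LinearMap.finrank_range_add_finrank_ker (sumL N)
  rw [hsurj, finrank_top, finrank_euclideanSpace, Fintype.card_fin] at h1
  have h2 : finrank ℝ ℝ = 1 := finrank_self ℝ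
  omega

lemma vectorSpan_le_ker {N : ℕ} (s : Set (EuclideanSpace ℝ (Fin N)))
    (hs : ∀ x ∈ s, ∑ j, x j = 1) :
    vectorSpan ℝ s ≤ LinearMap.ker (sumL N) := by
  rw [vectorSpan_def]
  apply Submodule.span_le.2
  rintro v hv
  rw [Set.mem_vsub] at hv
  obtain ⟨x, hx, y, hy, rfl⟩ := hv
  rw [SetLike.mem_coe, LinearMap.mem_ker, vsub_eq_sub, map_sub, sumL_apply, sumL_apply,
    hs x hx, hs y hy, sub_self]

lemma abs_coord_le {N : ℕ} (x : EuclideanSpace ℝ (Fin N)) (j : Fin N) : |x j| ≤ ‖x‖ := by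
  rw [EuclideanSpace.norm_eq]
  have h1 : |x j| = Real.sqrt (‖x j‖ ^ 2) := by
    rw [Real.sqrt_sq_eq_abs]; simp [Real.norm_eq_abs, abs_abs]
  rw [h1]
  exact Real.sqrt_le_sqrt (Finset.single_le_sum (f := fun i => ‖x i‖ ^ 2)
    (fun i _ => sq_nonneg _) (Finset.mem_univ j))

lemma exists_not_mem {N : ℕ} (hN : 1 ≤ N) (W : AffineSubspace ℝ (EuclideanSpace ℝ (Fin N)))
    (hW : finrank ℝ W.direction < N - 1) :
    ∃ h : EuclideanSpace ℝ (Fin N), (∑ j, h j = 1) ∧ h ∉ W := by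
  by_contra hc
  push_neg at hc
  have he0 : ∑ j, (EuclideanSpace.single (⟨0, hN⟩ : Fin N) (1:ℝ)) j = 1 := by
    simp [EuclideanSpace.single_apply]
  have hK : LinearMap.ker (sumL N) ≤ W.direction := by
    intro v hv
    rw [LinearMap.mem_ker, sumL_apply] at hv
    have h1 : v + EuclideanSpace.single (⟨0, hN⟩ : Fin N) (1:ℝ) ∈ W := by
      apply hc
      simp only [PiLp.add_apply, Finset.sum_add_distrib, hv, he0, zero_add]
    have h2 : EuclideanSpace.single (⟨0, hN⟩ : Fin N) (1:ℝ) ∈ W := hc _ he0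
    have h3 := AffineSubspace.vsub_mem_direction h1 h2
    simpa [vsub_eq_sub] using h3
  have h4 := Submodule.finrank_mono hK
  rw [finrank_ker_sumL hN] at h4
  omega

lemma line_not_mem {V : Type*} [NormedAddCommGroup V] [NormedSpace ℝ V]
    (W : AffineSubspace ℝ V) {p h : V} (hp : p ∈ W) (hh : h ∉ W) {t : ℝ} (ht : t ≠ 0) :
    p + t • (h - p) ∉ W := by
  intro hm
  have hd : t • (h - p) ∈ W.direction := by
    have h1 := AffineSubspace.vsub_mem_direction hm hp
    simpa [vsub_eq_sub] using h1
  have h2 : h - p ∈ W.direction := by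
    have h3 := W.direction.smul_mem t⁻¹ hd
    rwa [smul_smul, inv_mul_cancel₀ ht, one_smul] at h3
  have h4 : h ∈ W := by
    have h5 := AffineSubspace.vadd_mem_of_mem_direction h2 hp
    simpa [vadd_eq_add, sub_add_cancel] using h5
  exact hh h4

lemma perturb {N : ℕ} {A : Type*} (W : A → AffineSubspace ℝ (EuclideanSpace ℝ (Fin N)))
    (hWc : ∀ b, IsClosed (W b : Set (EuclideanSpace ℝ (Fin N))))
    (S : Finset A) :
    (∀ b ∈ S, ∃ h : EuclideanSpace ℝ (Fin N), (∑ j, h j = 1) ∧ h ∉ W b) →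
    ∀ x : EuclideanSpace ℝ (Fin N), (∑ j, x j = 1) → ∀ δ : ℝ, 0 < δ →
    ∃ p : EuclideanSpace ℝ (Fin N), (∑ j, p j = 1) ∧ ‖p - x‖ < δ ∧ ∀ b ∈ S, p ∉ W b := by
  classical
  induction S using Finset.induction_on with
  | empty => intro _ x hx δ hδ; exact ⟨x, hx, by simpa using hδ, by simp⟩
  | @insert i₀ S hni IH =>
    intro hW x hx δ hδ
    obtain ⟨p, hp1, hp2, hp3⟩ :=
      IH (fun b hb => hW b (Finset.mem_insert_of_mem hb)) x hx (δ/2) (half_pos hδ)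
    by_cases hpW : p ∈ W i₀
    · obtain ⟨h, hh1, hh2⟩ := hW i₀ (Finset.mem_insert_self _ _)
      have hU : IsClosed (⋃ b ∈ S, (W b : Set (EuclideanSpace ℝ (Fin N)))) :=
        Set.Finite.isClosed_biUnion S.finite_toSet (fun b _ => hWc b)
      have hpU : p ∈ (⋃ b ∈ S, (W b : Set (EuclideanSpace ℝ (Fin N))))ᶜ := by
        simp only [Set.mem_compl_iff, Set.mem_iUnion, SetLike.mem_coe, not_exists]
        intro b hb hmem
        exact hp3 b hb hmem
      obtain ⟨η, hη, hball⟩ := Metric.mem_nhds_iff.mp (hU.isOpen_compl.mem_nhds hpU)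
      have hhp : h - p ≠ 0 := by
        intro h0
        rw [sub_eq_zero] at h0; subst h0; exact hh2 hpW
      have hnorm : 0 < ‖h - p‖ := norm_pos_iff.mpr hhp
      set m : ℝ := min η (δ/2) with hmdef
      have hm : 0 < m := lt_min hη (half_pos hδ)
      set t : ℝ := m / (2 * ‖h - p‖) with htdef
      have htpos : 0 < t := by positivity
      have hkey : t * ‖h - p‖ = m / 2 := by
        rw [htdef]; field_simp
      have hns : ‖t • (h - p)‖ = t * ‖h - p‖ := by
        rw [norm_smul, Real.norm_eq_abs, abs_of_pos htpos]
      refine ⟨p + t • (h - p), ?_, ?_, ?_⟩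
      · have hcoord : ∀ j, (p + t • (h - p)) j = p j + t * (h j - p j) := fun j => by
          simp [PiLp.add_apply, PiLp.smul_apply, PiLp.sub_apply]
        rw [Finset.sum_congr rfl (fun j _ => hcoord j), Finset.sum_add_distrib,
          ← Finset.mul_sum, Finset.sum_sub_distrib, hp1, hh1]
        ring
      · have h6 : p + t • (h - p) - x = t • (h - p) + (p - x) := by abel
        have h7 : ‖p + t • (h - p) - x‖ ≤ ‖t • (h - p)‖ + ‖p - x‖ := by
          rw [h6]; exact norm_add_le _ _
        have h8 : t * ‖h - p‖ < δ / 2 := by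
          rw [hkey]
          have : m ≤ δ/2 := min_le_right _ _
          linarith
        rw [hns] at h7
        linarith
      · intro b hb
        rcases Finset.mem_insert.mp hb with rfl | hb'
        · exact line_not_mem (W b) hpW hh2 (ne_of_gt htpos)
        · intro hmem
          have h9 : p + t • (h - p) ∈ Metric.ball p η := by
            rw [Metric.mem_ball, dist_eq_norm]
            have h10 : p + t • (h - p) - p = t • (h - p) := by abel
            rw [h10, hns, hkey]
            have : m ≤ η := min_le_left _ _
            linarith
          have h11 := hball h9
          simp only [Set.mem_compl_iff, Set.mem_iUnion, SetLike.mem_coe, not_exists] at h11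
          exact h11 b hb' hmem
    · refine ⟨p, hp1, by linarith, ?_⟩
      intro b hb
      rcases Finset.mem_insert.mp hb with rfl | hb'
      · exact hpW
      · exact hp3 b hb'

lemma extend_beyond {V : Type*} [NormedAddCommGroup V] [NormedSpace ℝ V]
    {C : Set V} {x y : V} (hx : x ∈ intrinsicInterior ℝ C) (hy : y ∈ C) :
    ∃ t : ℝ, 0 < t ∧ x + t • (x - y) ∈ C := by
  obtain ⟨q, hq, hqx⟩ := mem_intrinsicInterior.mp hx
  obtain ⟨ε, hε, hball⟩ := Metric.mem_nhds_iff.mp (mem_interior_iff_mem_nhds.mp hq)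
  set t : ℝ := ε / (2 * (‖x - y‖ + 1)) with htdef
  have htpos : 0 < t := by positivity
  have hymem : y ∈ affineSpan ℝ C := subset_affineSpan ℝ C hy
  have hxmem : x ∈ affineSpan ℝ C := by rw [← hqx]; exact q.2
  have hzmem : x + t • (x - y) ∈ affineSpan ℝ C := by
    have h1 := (affineSpan ℝ C).smul_vsub_vadd_mem t hxmem hymem hxmem
    simpa [vsub_eq_sub, vadd_eq_add, add_comm] using h1
  refine ⟨t, htpos, ?_⟩
  have hzball : (⟨x + t • (x - y), hzmem⟩ : affineSpan ℝ C) ∈ Metric.ball q ε := by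
    rw [Metric.mem_ball, Subtype.dist_eq, hqx, dist_eq_norm]
    have h2 : x + t • (x - y) - x = t • (x - y) := by abel
    rw [h2, norm_smul, Real.norm_eq_abs, abs_of_pos htpos]
    have h3 : t * ‖x - y‖ < t * (‖x - y‖ + 1) := by
      have := mul_lt_mul_of_pos_left (by linarith : ‖x - y‖ < ‖x - y‖ + 1) htpos
      linarith
    have h4 : t * (‖x - y‖ + 1) = ε / 2 := by
      rw [htdef]; field_simp
    linarith
  have h5 := hball hzball
  simpa using h5

end Stmt10Aux

open Stmt10Aux in
/-- A nonempty lower-dimensional best-reply region is contained in a full-dimensional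
best-reply region of some other action. -/
theorem stmt10 (N : ℕ) (A : Type*) [Fintype A] (u : A → Fin N → ℝ)
    (B : A → Set (EuclideanSpace ℝ (Fin N)))
    (hB : ∀ a, B a = {μ | (∀ j, 0 ≤ μ j) ∧ (∑ j, μ j = 1) ∧
      ∀ b, ∑ ω, μ ω * u b ω ≤ ∑ ω, μ ω * u a ω})
    (a : A) (hne : (B a).Nonempty)
    (hdim : Module.finrank ℝ (vectorSpan ℝ (B a)) < N - 1) :
    ∃ b, b ≠ a ∧ B a ⊆ B b ∧ Module.finrank ℝ (vectorSpan ℝ (B b)) = N - 1 := by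
  classical
  have hN1 : 1 ≤ N := by omega
  -- continuity of evaluations
  have hev : ∀ ω : Fin N, Continuous fun μ : EuclideanSpace ℝ (Fin N) => μ ω := fun ω =>
    (EuclideanSpace.proj ω : EuclideanSpace ℝ (Fin N) →L[ℝ] ℝ).continuous
  have hcont : ∀ g : Fin N → ℝ,
      Continuous fun μ : EuclideanSpace ℝ (Fin N) => ∑ ω, μ ω * g ω := fun g =>
    continuous_finset_sum _ (fun ω _ => (hev ω).mul continuous_const)
  have hBclosed : ∀ b, IsClosed (B b) := by
    intro b
    rw [hB b]
    have heq : {μ : EuclideanSpace ℝ (Fin N) | (∀ j, 0 ≤ μ j) ∧ (∑ j, μ j = 1) ∧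
        ∀ b', ∑ ω, μ ω * u b' ω ≤ ∑ ω, μ ω * u b ω} =
        (⋂ j, {μ : EuclideanSpace ℝ (Fin N) | 0 ≤ μ j}) ∩
        ({μ : EuclideanSpace ℝ (Fin N) | ∑ j, μ j = 1} ∩
         ⋂ b', {μ : EuclideanSpace ℝ (Fin N) |
           ∑ ω, μ ω * u b' ω ≤ ∑ ω, μ ω * u b ω}) := by
      ext μ; simp [Set.mem_iInter, Set.mem_setOf_eq]
    rw [heq]
    refine IsClosed.inter (isClosed_iInter fun j => isClosed_le continuous_const (hev j))
      (IsClosed.inter ?_ (isClosed_iInter fun b' => isClosed_le (hcont _) (hcont _)))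
    exact isClosed_eq (continuous_finset_sum _ fun j _ => hev j) continuous_const
  have hBconvex : ∀ b, Convex ℝ (B b) := by
    intro b
    rw [hB b]
    intro μ hμ ν hν s t hs ht hst
    have hcoord : ∀ j, (s • μ + t • ν) j = s * μ j + t * ν j := fun j => by
      simp [PiLp.add_apply, PiLp.smul_apply]
    refine ⟨?_, ?_, ?_⟩
    · intro j
      rw [hcoord j]
      exact add_nonneg (mul_nonneg hs (hμ.1 j)) (mul_nonneg ht (hν.1 j))
    · rw [Finset.sum_congr rfl fun j _ => hcoord j, Finset.sum_add_distrib,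
        ← Finset.mul_sum, ← Finset.mul_sum, hμ.2.1, hν.2.1, mul_one, mul_one, hst]
    · intro c'
      have hsplit : ∀ g : Fin N → ℝ, ∑ ω, (s • μ + t • ν) ω * g ω =
          s * ∑ ω, μ ω * g ω + t * ∑ ω, ν ω * g ω := by
        intro g
        rw [Finset.sum_congr rfl fun ω _ => by rw [hcoord ω]]
        simp only [add_mul, Finset.sum_add_distrib, Finset.mul_sum, mul_assoc]
      rw [hsplit, hsplit]
      have h1 := hμ.2.2 c'
      have h2 := hν.2.2 c'
      nlinarith [mul_le_mul_of_nonneg_left h1 hs, mul_le_mul_of_nonneg_left h2 ht]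
  obtain ⟨μ₀, hμ₀⟩ := Set.Nonempty.intrinsicInterior (hBconvex a) hne
  have hμ₀a : μ₀ ∈ B a := intrinsicInterior_subset hμ₀
  have key : ∃ b, μ₀ ∈ B b ∧ ¬ (finrank ℝ (vectorSpan ℝ (B b)) < N - 1) := by
    by_contra hcon
    push_neg at hcon
    have hUclosed : IsClosed (⋃ b ∈ (Finset.univ.filter fun b =>
        ¬ finrank ℝ (vectorSpan ℝ (B b)) < N - 1), B b) :=
      Set.Finite.isClosed_biUnion (Finset.finite_toSet _) (fun b _ => hBclosed b)
    have hμ₀U : μ₀ ∈ (⋃ b ∈ (Finset.univ.filter fun b =>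
        ¬ finrank ℝ (vectorSpan ℝ (B b)) < N - 1), B b)ᶜ := by
      simp only [Set.mem_compl_iff, Set.mem_iUnion, not_exists, Finset.mem_filter,
        Finset.mem_univ, true_and]
      intro b hb hmem
      exact hb (hcon b hmem)
    obtain ⟨ε, hε, hball⟩ := Metric.mem_nhds_iff.mp (hUclosed.isOpen_compl.mem_nhds hμ₀U)
    set c : EuclideanSpace ℝ (Fin N) := WithLp.toLp 2 (fun _ => (N : ℝ)⁻¹) with hcdef
    have hcsum : ∑ j, c j = 1 := by
      simp only [hcdef, PiLp.toLp_apply]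
      rw [Finset.sum_const, Finset.card_univ, Fintype.card_fin, nsmul_eq_mul]
      field_simp
    have hμ₀sum : ∑ j, μ₀ j = 1 := by
      rw [hB a] at hμ₀a; exact hμ₀a.2.1
    have hμ₀nn : ∀ j, 0 ≤ μ₀ j := by
      rw [hB a] at hμ₀a; exact hμ₀a.1
    set s : ℝ := min 1 (ε / (2 * (‖c - μ₀‖ + 1))) with hsdef
    have hspos : 0 < s := lt_min one_pos (by positivity)
    have hsle1 : s ≤ 1 := min_le_left _ _
    set μ₁ : EuclideanSpace ℝ (Fin N) := μ₀ + s • (c - μ₀) with hμ₁def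
    have hμ₁coord : ∀ j, μ₁ j = μ₀ j + s * ((N:ℝ)⁻¹ - μ₀ j) := fun j => by
      simp [hμ₁def, hcdef, PiLp.add_apply, PiLp.smul_apply, PiLp.sub_apply]
    have hμ₁sum : ∑ j, μ₁ j = 1 := by
      rw [Finset.sum_congr rfl fun j _ => hμ₁coord j, Finset.sum_add_distrib,
        ← Finset.mul_sum, Finset.sum_sub_distrib, hμ₀sum]
      have : ∑ _j : Fin N, (N:ℝ)⁻¹ = 1 := by
        rw [Finset.sum_const, Finset.card_univ, Fintype.card_fin, nsmul_eq_mul]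
        field_simp
      rw [this]
      ring
    have hμ₁lb : ∀ j, s * (N:ℝ)⁻¹ ≤ μ₁ j := by
      intro j
      rw [hμ₁coord j]
      have h1 : 0 ≤ (1 - s) * μ₀ j := mul_nonneg (by linarith) (hμ₀nn j)
      nlinarith
    have hμ₁μ₀ : ‖μ₁ - μ₀‖ ≤ ε / 2 := by
      have h1 : μ₁ - μ₀ = s • (c - μ₀) := by rw [hμ₁def]; abel
      rw [h1, norm_smul, Real.norm_eq_abs, abs_of_pos hspos]
      have h2 : s ≤ ε / (2 * (‖c - μ₀‖ + 1)) := min_le_right _ _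
      have h3 : 0 < ‖c - μ₀‖ + 1 := by positivity
      have h4 : (ε / (2 * (‖c - μ₀‖ + 1))) * (‖c - μ₀‖ + 1) = ε / 2 := by
        field_simp
      nlinarith [mul_le_mul_of_nonneg_right h2 (norm_nonneg (c - μ₀)),
        norm_nonneg (c - μ₀), hspos, h2]
    set δ : ℝ := min (ε/2) (s * (N:ℝ)⁻¹) with hδdef
    have hδpos : 0 < δ := lt_min (half_pos hε) (by positivity)
    obtain ⟨p, hp1, hp2, hp3⟩ := perturb (fun b => affineSpan ℝ (B b))
      (fun b => (affineSpan ℝ (B b)).closed_of_finiteDimensional)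
      (Finset.univ.filter fun b => finrank ℝ (vectorSpan ℝ (B b)) < N - 1)
      (by
        intro b hb
        rw [Finset.mem_filter] at hb
        have := exists_not_mem hN1 (affineSpan ℝ (B b)) (by rw [direction_affineSpan]; exact hb.2)
        exact this)
      μ₁ hμ₁sum δ hδpos
    have hpnn : ∀ j, 0 ≤ p j := by
      intro j
      have h1 : |p j - μ₁ j| ≤ ‖p - μ₁‖ := by
        have := abs_coord_le (p - μ₁) j
        simpa [PiLp.sub_apply] using this
      have h2 : ‖p - μ₁‖ < s * (N:ℝ)⁻¹ := lt_of_lt_of_le hp2 (min_le_right _ _)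
      have h3 := hμ₁lb j
      have h4 : -(|p j - μ₁ j|) ≤ p j - μ₁ j := neg_abs_le _
      linarith
    obtain ⟨b, -, hbm⟩ := Finset.exists_max_image Finset.univ
      (fun b => ∑ ω, p ω * u b ω) ⟨a, Finset.mem_univ a⟩
    have hpb : p ∈ B b := by
      rw [hB b]
      exact ⟨hpnn, hp1, fun c' => hbm c' (Finset.mem_univ c')⟩
    by_cases hbdim : finrank ℝ (vectorSpan ℝ (B b)) < N - 1
    · exact hp3 b (by rw [Finset.mem_filter]; exact ⟨Finset.mem_univ b, hbdim⟩)
        (subset_affineSpan ℝ (B b) hpb)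
    · have hpU : p ∈ ⋃ b ∈ (Finset.univ.filter fun b =>
          ¬ finrank ℝ (vectorSpan ℝ (B b)) < N - 1), B b := by
        simp only [Set.mem_iUnion, Finset.mem_filter, Finset.mem_univ, true_and]
        exact ⟨b, hbdim, hpb⟩
      have hpball : p ∈ Metric.ball μ₀ ε := by
        rw [Metric.mem_ball, dist_eq_norm]
        have h1 : p - μ₀ = (p - μ₁) + (μ₁ - μ₀) := by abel
        have h2 : ‖p - μ₀‖ ≤ ‖p - μ₁‖ + ‖μ₁ - μ₀‖ := by rw [h1]; exact norm_add_le _ _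
        have h3 : ‖p - μ₁‖ < ε/2 := lt_of_lt_of_le hp2 (min_le_left _ _)
        linarith
      exact hball hpball hpU
  obtain ⟨b, hμ₀b, hbbig⟩ := key
  have hble : finrank ℝ (vectorSpan ℝ (B b)) ≤ N - 1 := by
    have h1 : vectorSpan ℝ (B b) ≤ LinearMap.ker (sumL N) :=
      vectorSpan_le_ker _ (fun x hx => by rw [hB b] at hx; exact hx.2.1)
    have h2 := Submodule.finrank_mono h1
    rwa [finrank_ker_sumL hN1] at h2
  have hbeq : finrank ℝ (vectorSpan ℝ (B b)) = N - 1 := by omega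
  have hba : b ≠ a := by
    intro h; rw [h] at hbbig; exact hbbig hdim
  refine ⟨b, hba, ?_, hbeq⟩
  intro y hy
  obtain ⟨t, ht, hz⟩ := extend_beyond hμ₀ hy
  have hEz : ∀ c' : A, ∑ ω, (μ₀ + t • (μ₀ - y)) ω * u c' ω
      = (1+t) * (∑ ω, μ₀ ω * u c' ω) - t * (∑ ω, y ω * u c' ω) := by
    intro c'
    have hcoord : ∀ ω, (μ₀ + t • (μ₀ - y)) ω = μ₀ ω + t * (μ₀ ω - y ω) := fun ω => by
      simp [PiLp.add_apply, PiLp.smul_apply, PiLp.sub_apply]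
    calc ∑ ω, (μ₀ + t • (μ₀ - y)) ω * u c' ω
        = ∑ ω, (μ₀ ω * u c' ω + t * (μ₀ ω * u c' ω) - t * (y ω * u c' ω)) := by
          apply Finset.sum_congr rfl; intro ω _; rw [hcoord ω]; ring
      _ = (1+t) * (∑ ω, μ₀ ω * u c' ω) - t * (∑ ω, y ω * u c' ω) := by
          rw [Finset.sum_sub_distrib, Finset.sum_add_distrib, ← Finset.mul_sum,
            ← Finset.mul_sum]
          ring
  rw [hB a] at hy hz hμ₀a
  rw [hB b] at hμ₀b ⊢
  obtain ⟨hynn, hysum, hyle⟩ := hy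
  have hM : ∑ ω, μ₀ ω * u a ω = ∑ ω, μ₀ ω * u b ω :=
    le_antisymm (hμ₀b.2.2 a) (hμ₀a.2.2 b)
  have hzb := hz.2.2 b
  rw [hEz a, hEz b] at hzb
  have hYab : ∑ ω, y ω * u a ω ≤ ∑ ω, y ω * u b ω := by nlinarith
  have hYba : ∑ ω, y ω * u b ω ≤ ∑ ω, y ω * u a ω := hyle b
  refine ⟨hynn, hysum, fun c' => ?_⟩
  calc ∑ ω, y ω * u c' ω ≤ ∑ ω, y ω * u a ω := hyle c'
    _ = ∑ ω, y ω * u b ω := le_antisymm hYab hYba
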